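/- The simulation-based proxy equals the true parameter in the gamma–Poisson model. Fix γ > 0, λ₀ > 0, and n ≥ 1. Let Y be a random count with the marginal distribution of the gamma–Poisson model at (γ, λ₀), i.e., Y | X ∼ Poisson(X) with X ∼ Gamma(γ, λ₀), and for λ > 0 define the data-averaged expected simulated log-likelihood per observation u(λ₀, λ) := E_Y[ μ₁(λ; Y) ], where μ₁(λ; y) = E_{X ∼ Gamma(γ,λ)}[ log( e^{−X} X^{y} / y! ) ]. Then u(λ₀, λ) is finite for all λ > 0 and the function λ ↦ u(λ₀, λ) on (0, ∞) attains its unique global maximum at λ = λ₀. Consequently the simulation-based proxy satisfies R(λ₀) = λ₀, so the inference bias is zero. -/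

import Mathlib

open MeasureTheory ProbabilityTheory Real

/-- The expected simulated log-likelihood of a single Poisson observation `y`
under simulation `X ∼ Gamma(γ, λ)`:  `μ₁(λ; y) = E[ log( e^{−X} X^y / y! ) ]`. -/
noncomputable def esllGammaPoisson (γ lam : ℝ) (y : ℕ) : ℝ :=
  ∫ x, Real.log (Real.exp (-x) * x ^ y / (Nat.factorial y : ℝ)) ∂(gammaMeasure γ lam)

/-- The marginal probability mass function of an observation in the gamma–Poisson
model at parameter `(γ, λ₀)`:  `P(Y = y) = E_{X ∼ Gamma(γ,λ₀)}[ e^{−X} X^y / y! ]`. -/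
noncomputable def margGammaPoisson (γ lam₀ : ℝ) (y : ℕ) : ℝ :=
  ∫ x, Real.exp (-x) * x ^ y / (Nat.factorial y : ℝ) ∂(gammaMeasure γ lam₀)

open Set
open scoped ENNReal NNReal

namespace GP


/-- smooth version of the gamma pdf -/
noncomputable def pdf (γ r x : ℝ) : ℝ :=
  r ^ γ / Real.Gamma γ * x ^ (γ - 1) * Real.exp (-(r * x))

lemma integral_gamma (γ r : ℝ) (hγ : 0 < γ) (hr : 0 < r) (f : ℝ → ℝ) :
    ∫ x, f x ∂(gammaMeasure γ r) = ∫ x in Ioi 0, f x * pdf γ r x := by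
  rw [show gammaMeasure γ r
      = volume.withDensity (fun x => ((Real.toNNReal (gammaPDFReal γ r x) : ℝ≥0) : ℝ≥0∞)) from rfl,
    integral_withDensity_eq_integral_smul (measurable_gammaPDFReal γ r).real_toNNReal f]
  have h1 : ∀ x : ℝ, (Real.toNNReal (gammaPDFReal γ r x) : ℝ≥0) • f x
      = f x * gammaPDFReal γ r x := by
    intro x
    rw [NNReal.smul_def, smul_eq_mul, Real.coe_toNNReal _ (gammaPDFReal_nonneg hγ hr x), mul_comm]
  simp_rw [h1]
  rw [← setIntegral_eq_integral_of_forall_compl_eq_zero (s := Ici (0:ℝ))]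
  · rw [integral_Ici_eq_integral_Ioi]
    refine setIntegral_congr_fun measurableSet_Ioi fun x hx => ?_
    rw [gammaPDFReal, if_pos (le_of_lt hx)]
    rfl
  · intro x hx
    rw [gammaPDFReal, if_neg (by simpa using hx), mul_zero]

lemma integrable_gamma_iff (γ r : ℝ) (hγ : 0 < γ) (hr : 0 < r) (f : ℝ → ℝ) :
    Integrable f (gammaMeasure γ r) ↔
      IntegrableOn (fun x => f x * pdf γ r x) (Ioi 0) := by
  have hd : gammaPDF γ r = fun x => ENNReal.ofReal (gammaPDFReal γ r x) := rfl
  rw [show gammaMeasure γ r = volume.withDensity (gammaPDF γ r) from rfl, hd,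
    integrable_withDensity_iff (measurable_gammaPDFReal γ r).ennreal_ofReal
      (ae_of_all _ fun x => ENNReal.ofReal_lt_top)]
  have h1 : ∀ x : ℝ, f x * (ENNReal.ofReal (gammaPDFReal γ r x)).toReal
      = f x * gammaPDFReal γ r x := by
    intro x
    rw [ENNReal.toReal_ofReal (gammaPDFReal_nonneg hγ hr x)]
  simp_rw [h1]
  rw [← integrableOn_iff_integrable_of_support_subset (s := Ici (0:ℝ)),
    integrableOn_Ici_iff_integrableOn_Ioi]
  · constructor <;> intro h <;> refine h.congr_fun (fun x hx => ?_) measurableSet_Ioi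
    · beta_reduce; rw [gammaPDFReal, if_pos (le_of_lt hx)]; rfl
    · rw [gammaPDFReal, if_pos (le_of_lt hx)]; rfl
  · intro x hx
    rcases Function.mem_support.mp hx with h
    by_contra hc
    exact h (by rw [gammaPDFReal, if_neg (by simpa using hc), mul_zero])

lemma ae_pos (γ r : ℝ) : ∀ᵐ x ∂(gammaMeasure γ r), 0 < x := by
  rw [ae_iff]
  have h1 : {x : ℝ | ¬ 0 < x} = Iic 0 := by ext x; simp
  rw [h1, show gammaMeasure γ r = volume.withDensity (gammaPDF γ r) from rfl,
    withDensity_apply _ measurableSet_Iic]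
  have h2 : Iic (0:ℝ) = Iio 0 ∪ {0} := by ext x; simp [le_iff_lt_or_eq]
  rw [h2]
  refine le_antisymm (le_trans (lintegral_union_le _ _ _) ?_) zero_le
  rw [lintegral_gammaPDF_of_nonpos le_rfl, setLIntegral_measure_zero _ _ (measure_singleton (0:ℝ)),
    add_zero]



lemma Mint {r : ℝ} (hr : 0 < r) {q : ℝ} (hq : -1 < q) :
    IntegrableOn (fun x : ℝ => x ^ q * Real.exp (-(r * x))) (Ioi 0) := by
  have := integrableOn_rpow_mul_exp_neg_mul_rpow hq zero_lt_one hr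
  refine this.congr_fun (fun x hx => ?_) measurableSet_Ioi
  beta_reduce
  rw [rpow_one, neg_mul]

lemma Mval {r : ℝ} (hr : 0 < r) {q : ℝ} (hq : -1 < q) :
    ∫ x in Ioi (0:ℝ), x ^ q * Real.exp (-(r * x))
      = r ^ (-(q+1)) * Real.Gamma (q+1) := by
  have := integral_rpow_mul_exp_neg_mul_rpow (by norm_num : (0:ℝ) < 1) hq hr
  simp only [rpow_one, div_one, one_mul, mul_one] at this
  rw [← this]
  refine setIntegral_congr_fun measurableSet_Ioi fun x hx => ?_
  rw [neg_mul]

/-- `|log x| ≤ (1/s) * (x^s + x^(-s))` for `x > 0`, `s > 0`. -/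
lemma abs_log_le {x s : ℝ} (hx : 0 < x) (hs : 0 < s) :
    |Real.log x| ≤ (1/s) * (x ^ s + x ^ (-s)) := by
  have hxs : (0:ℝ) < x ^ s := rpow_pos_of_pos hx s
  have hxns : (0:ℝ) < x ^ (-s) := rpow_pos_of_pos hx (-s)
  rcases le_or_gt 1 x with h1 | h1
  · have hl : 0 ≤ Real.log x := Real.log_nonneg h1
    rw [abs_of_nonneg hl]
    have h2 : Real.log (x ^ s) ≤ x ^ s - 1 := Real.log_le_sub_one_of_pos hxs
    rw [Real.log_rpow hx] at h2
    have : s * Real.log x ≤ x ^ s + x ^ (-s) := by nlinarith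
    rw [div_mul_eq_mul_div, le_div_iff₀ hs]
    nlinarith
  · have hl : Real.log x ≤ 0 := Real.log_nonpos (le_of_lt hx) (le_of_lt h1)
    rw [abs_of_nonpos hl]
    have h2 : Real.log (x ^ (-s)) ≤ x ^ (-s) - 1 := Real.log_le_sub_one_of_pos hxns
    rw [Real.log_rpow hx] at h2
    have : -(s * Real.log x) ≤ x ^ s + x ^ (-s) := by nlinarith
    rw [div_mul_eq_mul_div, le_div_iff₀ hs]
    nlinarith

lemma Lint {γ r : ℝ} (hγ : 0 < γ) (hr : 0 < r) :
    IntegrableOn (fun x : ℝ => Real.log x * (x ^ (γ-1) * Real.exp (-(r * x)))) (Ioi 0) := by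
  have hg2 : (0:ℝ) < γ/2 := by positivity
  have hmaj : IntegrableOn (fun x : ℝ =>
      (1/(γ/2)) * (x ^ (γ/2 + (γ-1)) * Real.exp (-(r * x)))
      + (1/(γ/2)) * (x ^ (-(γ/2) + (γ-1)) * Real.exp (-(r * x)))) (Ioi 0) := by
    exact ((Mint hr (by linarith)).const_mul _).add ((Mint hr (by linarith)).const_mul _)
  refine Integrable.mono' hmaj ?_ ?_
  · exact (Real.measurable_log.mul
      ((measurable_id'.pow_const _).mul ((measurable_id'.const_mul _).neg.exp))
      ).aestronglyMeasurable
  · filter_upwards [ae_restrict_mem measurableSet_Ioi] with x hx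
    have hx0 : (0:ℝ) < x := hx
    have he : (0:ℝ) < Real.exp (-(r * x)) := Real.exp_pos _
    have hp : (0:ℝ) < x ^ (γ-1) := rpow_pos_of_pos hx0 _
    rw [norm_mul, norm_of_nonneg (le_of_lt (mul_pos hp he)), Real.norm_eq_abs]
    have h1 := abs_log_le hx0 hg2
    have h2 : |Real.log x| * (x ^ (γ-1) * Real.exp (-(r*x)))
        ≤ (1/(γ/2)) * (x ^ (γ/2) + x ^ (-(γ/2))) * (x ^ (γ-1) * Real.exp (-(r*x))) := by
      exact mul_le_mul_of_nonneg_right h1 (le_of_lt (mul_pos hp he))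
    refine le_trans h2 (le_of_eq ?_)
    rw [rpow_add hx0, rpow_add hx0]
    ring

/-- the unnormalized log-moment of `Gamma(γ,1)` -/
noncomputable def A (γ : ℝ) : ℝ :=
  ∫ x in Ioi (0:ℝ), Real.log x * (x ^ (γ-1) * Real.exp (-x))

lemma Lval {γ r : ℝ} (hγ : 0 < γ) (hr : 0 < r) :
    ∫ x in Ioi (0:ℝ), Real.log x * (x ^ (γ-1) * Real.exp (-(r * x)))
      = r ^ (-γ) * (A γ - Real.Gamma γ * Real.log r) := by
  have key := integral_comp_mul_left_Ioi
    (fun u : ℝ => Real.log u * (u ^ (γ-1) * Real.exp (-u))) 0 hr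
  rw [mul_zero] at key
  -- rewrite LHS of key
  have hptw : ∀ x ∈ Ioi (0:ℝ),
      Real.log (r * x) * ((r * x) ^ (γ-1) * Real.exp (-(r * x)))
      = r ^ (γ-1) * (Real.log r * (x ^ (γ-1) * Real.exp (-(r*x))))
        + r ^ (γ-1) * (Real.log x * (x ^ (γ-1) * Real.exp (-(r*x)))) := by
    intro x hx
    have hx0 : (0:ℝ) < x := hx
    rw [Real.log_mul (ne_of_gt hr) (ne_of_gt hx0), Real.mul_rpow (le_of_lt hr) (le_of_lt hx0)]
    ring
  rw [setIntegral_congr_fun measurableSet_Ioi hptw] at key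
  rw [integral_add (((Mint hr (by linarith)).const_mul _).const_mul _)
      ((Lint hγ hr).const_mul _), integral_const_mul, integral_const_mul, integral_const_mul,
      Mval hr (by linarith : (-1:ℝ) < γ - 1)] at key
  rw [show γ - 1 + 1 = γ by ring] at key
  have hrg : (0:ℝ) < r ^ (γ-1) := rpow_pos_of_pos hr _
  rw [smul_eq_mul, show (∫ x in Ioi (0:ℝ), (fun u : ℝ => Real.log u * (u ^ (γ-1) * Real.exp (-u))) x) = A γ from rfl] at key
  have e1 : (r ^ (γ-1))⁻¹ * r⁻¹ = r ^ (-γ) := by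
    rw [← rpow_neg_one r, ← rpow_neg (le_of_lt hr), ← rpow_add hr]
    ring_nf
  have h2 : r ^ (γ-1) * (∫ x in Ioi (0:ℝ), Real.log x * (x ^ (γ-1) * Real.exp (-(r * x))))
      = r ^ (γ-1) * ((r ^ (γ-1))⁻¹ * (r⁻¹ * A γ)
        - Real.log r * (r ^ (-γ) * Real.Gamma γ)) := by
    rw [mul_sub, ← mul_assoc, mul_inv_cancel₀ (ne_of_gt hrg), one_mul]
    linarith [key]
  have h4 := mul_left_cancel₀ (ne_of_gt hrg) h2
  rw [h4, ← mul_assoc, e1]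
  ring


section gm
variable {γ r : ℝ} (hγ : 0 < γ) (hr : 0 < r)
include hγ hr

omit hγ hr in
lemma npow_pdf_congr (n : ℕ) : ∀ x ∈ Ioi (0:ℝ),
    (x : ℝ) ^ n * pdf γ r x
      = (r ^ γ / Real.Gamma γ) * (x ^ (γ + n - 1) * Real.exp (-(r * x))) := by
  intro x hx
  have hx0 : (0:ℝ) < x := hx
  have hxe : x ^ (γ + (n:ℝ) - 1) = x ^ ((n:ℝ)) * x ^ (γ-1) := by
    rw [← Real.rpow_add hx0]; ring_nf
  rw [pdf, ← Real.rpow_natCast x n, hxe]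
  ring

lemma pow_integrable (n : ℕ) : Integrable (fun x : ℝ => x ^ n) (gammaMeasure γ r) := by
  rw [integrable_gamma_iff γ r hγ hr]
  refine IntegrableOn.congr_fun ((Mint hr (q := γ + n - 1) (by
    have : (0:ℝ) ≤ (n:ℝ) := Nat.cast_nonneg n
    linarith)).const_mul (r ^ γ / Real.Gamma γ)) ?_ measurableSet_Ioi
  intro x hx
  exact (npow_pdf_congr n x hx).symm

lemma pow_val (n : ℕ) : ∫ x, (x:ℝ) ^ n ∂(gammaMeasure γ r)
    = (r ^ γ / Real.Gamma γ) * (r ^ (-(γ + n)) * Real.Gamma (γ + n)) := by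
  rw [integral_gamma γ r hγ hr, setIntegral_congr_fun measurableSet_Ioi (npow_pdf_congr n),
    integral_const_mul, Mval hr (q := γ + n - 1)
      (by have : (0:ℝ) ≤ (n:ℝ) := Nat.cast_nonneg n; linarith),
    show γ + (n:ℝ) - 1 + 1 = γ + n by ring]

lemma mean_val : ∫ x, x ∂(gammaMeasure γ r) = γ / r := by
  have h := pow_val hγ hr 1
  simp only [pow_one, Nat.cast_one] at h
  rw [h, Real.Gamma_add_one (ne_of_gt hγ),
    show -(γ+(1:ℝ)) = -γ + (-1) by ring, Real.rpow_add hr, Real.rpow_neg_one,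
    Real.rpow_neg (le_of_lt hr)]
  have hΓ : Real.Gamma γ ≠ 0 := ne_of_gt (Real.Gamma_pos_of_pos hγ)
  have hrγ : r ^ γ ≠ 0 := ne_of_gt (Real.rpow_pos_of_pos hr γ)
  field_simp

lemma mean_integrable : Integrable (fun x : ℝ => x) (gammaMeasure γ r) := by
  have := pow_integrable hγ hr 1
  simpa using this

lemma log_integrable : Integrable Real.log (gammaMeasure γ r) := by
  rw [integrable_gamma_iff γ r hγ hr]
  refine IntegrableOn.congr_fun ((Lint hγ hr).const_mul (r ^ γ / Real.Gamma γ)) ?_ measurableSet_Ioi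
  intro x _
  simp only [pdf]; ring

lemma log_val : ∫ x, Real.log x ∂(gammaMeasure γ r)
    = A γ / Real.Gamma γ - Real.log r := by
  rw [integral_gamma γ r hγ hr]
  have h : ∀ x ∈ Ioi (0:ℝ), Real.log x * pdf γ r x
      = (r ^ γ / Real.Gamma γ) * (Real.log x * (x ^ (γ-1) * Real.exp (-(r*x)))) := by
    intro x _; simp only [pdf]; ring
  rw [setIntegral_congr_fun measurableSet_Ioi h, integral_const_mul, Lval hγ hr]
  have hΓ : Real.Gamma γ ≠ 0 := ne_of_gt (Real.Gamma_pos_of_pos hγ)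
  have h2 : r ^ γ * r ^ (-γ) = 1 := by
    rw [← Real.rpow_add hr]; simp
  have h3 : r ^ γ / Real.Gamma γ * (r ^ (-γ) * (A γ - Real.Gamma γ * Real.log r))
      = (r ^ γ * r ^ (-γ)) * ((A γ - Real.Gamma γ * Real.log r) / Real.Gamma γ) := by ring
  rw [h3, h2, one_mul]
  field_simp


end gm

/-! ### Poisson series -/

lemma hs_exp (x : ℝ) : HasSum (fun n : ℕ => x ^ n / (Nat.factorial n : ℝ)) (Real.exp x) := by
  rw [Real.exp_eq_exp_ℝ]
  exact NormedSpace.expSeries_div_hasSum_exp x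

lemma hs0 (x : ℝ) :
    HasSum (fun y : ℕ => Real.exp (-x) * x ^ y / (Nat.factorial y : ℝ)) 1 := by
  have h := (hs_exp x).mul_left (Real.exp (-x))
  have he : Real.exp (-x) * Real.exp x = 1 := by
    rw [← Real.exp_add]; simp
  rw [he] at h
  refine h.congr_fun fun y => ?_
  rw [mul_div_assoc]

lemma hs1 (x : ℝ) :
    HasSum (fun y : ℕ => (y : ℝ) * (Real.exp (-x) * x ^ y / (Nat.factorial y : ℝ))) x := by
  set f : ℕ → ℝ := fun y => (y : ℝ) * (Real.exp (-x) * x ^ y / (Nat.factorial y : ℝ)) with hf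
  have h := (hs0 x).mul_left x
  have h2 : HasSum (fun n : ℕ => f (n + 1)) x := by
    have he : x * 1 = x := mul_one x
    rw [← he]
    refine h.congr_fun fun n => ?_
    simp only [hf]
    rw [Nat.factorial_succ]
    push_cast
    have hn : ((n:ℝ) + 1) ≠ 0 := by positivity
    field_simp
    ring
  have hsum0 : ∑ i ∈ Finset.range 1, f i = 0 := by simp [hf]
  exact (hasSum_nat_add_iff' (f := f) 1).mp (by rw [hsum0, sub_zero]; exact h2)

lemma hs2 (x : ℝ) :
    HasSum (fun y : ℕ => ((y : ℝ))^2 * (Real.exp (-x) * x ^ y / (Nat.factorial y : ℝ)))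
      (x^2 + x) := by
  set g : ℕ → ℝ := fun y => (y : ℝ) * ((y : ℝ) - 1) *
      (Real.exp (-x) * x ^ y / (Nat.factorial y : ℝ)) with hg
  have h := (hs0 x).mul_left (x^2)
  have h2 : HasSum (fun n : ℕ => g (n + 2)) (x^2) := by
    have he : x^2 * 1 = x^2 := mul_one _
    rw [← he]
    refine h.congr_fun fun n => ?_
    simp only [hg]
    rw [show n + 2 = (n + 1) + 1 by ring, Nat.factorial_succ, Nat.factorial_succ]
    push_cast
    have hn1 : ((n:ℝ) + 1) ≠ 0 := by positivity
    have hn2 : ((n:ℝ) + 1 + 1) ≠ 0 := by positivity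
    field_simp
    ring
  have h4 : ∑ i ∈ Finset.range 2, g i = 0 := by
    simp [hg, Finset.sum_range_succ]
  have h3 := (hasSum_nat_add_iff' (f := g) 2).mp (by rw [h4, sub_zero]; exact h2)
  have h5 := h3.add (hs1 x)
  refine h5.congr_fun fun y => ?_
  simp only [hg]
  ring

/-! ### weighted sums against the marginal -/

section weighted
variable {γ r : ℝ} (hγ : 0 < γ) (hr : 0 < r)
include hγ hr

lemma marg_nonneg (y : ℕ) : 0 ≤ margGammaPoisson γ r y := by
  refine integral_nonneg_of_ae ?_
  filter_upwards [ae_pos γ r] with x hx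
  positivity

lemma weighted (w : ℕ → ℝ) (hw : ∀ y, 0 ≤ w y) (W : ℝ → ℝ)
    (hW : ∀ x : ℝ, 0 < x →
      HasSum (fun y : ℕ => w y * (Real.exp (-x) * x ^ y / (Nat.factorial y : ℝ))) (W x))
    (hWint : Integrable W (gammaMeasure γ r)) :
    Summable (fun y : ℕ => w y * margGammaPoisson γ r y) ∧
      ∑' y : ℕ, w y * margGammaPoisson γ r y = ∫ x, W x ∂(gammaMeasure γ r) := by
  set μ := gammaMeasure γ r with hμ
  set F : ℕ → ℝ → ℝ :=
    fun y x => w y * (Real.exp (-x) * x ^ y / (Nat.factorial y : ℝ)) with hF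
  have hFmeas : ∀ y, Measurable (F y) := by
    intro y
    apply Measurable.const_mul
    exact (measurable_neg.exp.mul (measurable_id.pow_const y)).div_const _
  have hterm_nonneg : ∀ (y : ℕ) (x : ℝ), 0 < x → 0 ≤ F y x := by
    intro y x hx
    have := hw y
    simp only [hF]
    positivity
  have hFnonneg : ∀ y, 0 ≤ᵐ[μ] F y := by
    intro y
    filter_upwards [ae_pos γ r] with x hx using hterm_nonneg y x hx
  have hWnonneg : 0 ≤ᵐ[μ] W := by
    filter_upwards [ae_pos γ r] with x hx
    exact (hW x hx).nonneg fun y => hterm_nonneg y x hx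
  have hFle : ∀ y, ∀ᵐ x ∂μ, F y x ≤ W x := by
    intro y
    filter_upwards [ae_pos γ r] with x hx
    exact le_hasSum (hW x hx) y fun i _ => hterm_nonneg i x hx
  have hFint : ∀ y, Integrable (F y) μ := by
    intro y
    refine hWint.mono' (hFmeas y).aestronglyMeasurable ?_
    filter_upwards [hFnonneg y, hFle y] with x h1 h2
    rwa [Real.norm_eq_abs, abs_of_nonneg h1]
  have hFval : ∀ y, ∫ x, F y x ∂μ = w y * margGammaPoisson γ r y := by
    intro y
    simp only [hF]
    rw [integral_const_mul]
    rfl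
  have h1 : ∀ y, (∫⁻ x, ENNReal.ofReal (F y x) ∂μ)
      = ENNReal.ofReal (w y * margGammaPoisson γ r y) := by
    intro y
    rw [← ofReal_integral_eq_lintegral_ofReal (hFint y) (hFnonneg y), hFval y]
  have h2 : (∑' y : ℕ, ∫⁻ x, ENNReal.ofReal (F y x) ∂μ)
      = ∫⁻ x, ∑' y : ℕ, ENNReal.ofReal (F y x) ∂μ :=
    (lintegral_tsum fun y => ((hFmeas y).ennreal_ofReal).aemeasurable).symm
  have h3 : ∫⁻ x, ∑' y : ℕ, ENNReal.ofReal (F y x) ∂μ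
      = ∫⁻ x, ENNReal.ofReal (W x) ∂μ := by
    refine lintegral_congr_ae ?_
    filter_upwards [ae_pos γ r] with x hx
    rw [← ENNReal.ofReal_tsum_of_nonneg (fun y => hterm_nonneg y x hx) (hW x hx).summable,
      (hW x hx).tsum_eq]
  have h4 : ∫⁻ x, ENNReal.ofReal (W x) ∂μ = ENNReal.ofReal (∫ x, W x ∂μ) :=
    (ofReal_integral_eq_lintegral_ofReal hWint hWnonneg).symm
  have key : (∑' y : ℕ, ENNReal.ofReal (w y * margGammaPoisson γ r y))
      = ENNReal.ofReal (∫ x, W x ∂μ) := by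
    simp_rw [← h1]
    rw [h2, h3, h4]
  have hwm_nonneg : ∀ y, 0 ≤ w y * margGammaPoisson γ r y :=
    fun y => mul_nonneg (hw y) (marg_nonneg hγ hr y)
  have hsummable : Summable (fun y : ℕ => w y * margGammaPoisson γ r y) := by
    have := ENNReal.summable_toReal (by rw [key]; exact ENNReal.ofReal_ne_top)
    refine this.congr fun y => ?_
    rw [ENNReal.toReal_ofReal (hwm_nonneg y)]
  refine ⟨hsummable, ?_⟩
  have h5 := congrArg ENNReal.toReal key
  rw [ENNReal.tsum_toReal_eq (fun y => ENNReal.ofReal_ne_top)] at h5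
  rw [ENNReal.toReal_ofReal (integral_nonneg_of_ae hWnonneg)] at h5
  rw [← h5]
  exact tsum_congr fun y => (ENNReal.toReal_ofReal (hwm_nonneg y)).symm

lemma sum_marg :
    Summable (fun y : ℕ => margGammaPoisson γ r y) ∧
      ∑' y : ℕ, margGammaPoisson γ r y = 1 := by
  haveI := isProbabilityMeasure_gammaMeasure hγ hr
  have h := weighted hγ hr (fun _ => 1) (fun _ => zero_le_one) (fun _ => 1)
    (fun x hx => by simpa using hs0 x) (integrable_const 1)
  simp only [one_mul] at h
  rcases h with ⟨h1, h2⟩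
  refine ⟨h1, ?_⟩
  rw [h2]
  simp

lemma sum_mean :
    Summable (fun y : ℕ => (y : ℝ) * margGammaPoisson γ r y) ∧
      ∑' y : ℕ, (y : ℝ) * margGammaPoisson γ r y = γ / r := by
  have h := weighted hγ hr (fun y => (y : ℝ)) (fun y => Nat.cast_nonneg y) (fun x => x)
    (fun x hx => hs1 x) (mean_integrable hγ hr)
  exact ⟨h.1, by rw [h.2, mean_val hγ hr]⟩

lemma sum_sq :
    Summable (fun y : ℕ => ((y : ℝ))^2 * margGammaPoisson γ r y) := by
  have hWint : Integrable (fun x : ℝ => x^2 + x) (gammaMeasure γ r) :=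
    (pow_integrable hγ hr 2).add (mean_integrable hγ hr)
  exact (weighted hγ hr (fun y => ((y : ℝ))^2) (fun y => sq_nonneg _) (fun x => x^2 + x)
    (fun x hx => hs2 x) hWint).1

lemma logfact_le (y : ℕ) : Real.log (Nat.factorial y : ℝ) ≤ ((y : ℝ))^2 := by
  rcases Nat.eq_zero_or_pos y with h0 | h0
  · subst h0; simp
  have hy1 : (1:ℝ) ≤ (y : ℝ) := by exact_mod_cast h0
  have hfac : (Nat.factorial y : ℝ) ≤ ((y : ℝ)) ^ y := by
    exact_mod_cast Nat.factorial_le_pow y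
  have h1 : Real.log (Nat.factorial y : ℝ) ≤ Real.log (((y : ℝ)) ^ y) :=
    Real.log_le_log (by exact_mod_cast Nat.factorial_pos y) hfac
  rw [Real.log_pow] at h1
  have h2 : Real.log (y : ℝ) ≤ (y : ℝ) - 1 :=
    Real.log_le_sub_one_of_pos (by linarith)
  calc Real.log (Nat.factorial y : ℝ) ≤ (y : ℝ) * Real.log (y : ℝ) := h1
    _ ≤ (y : ℝ) * ((y : ℝ) - 1) := by
        refine mul_le_mul_of_nonneg_left h2 (by linarith)
    _ ≤ ((y : ℝ))^2 := by nlinarith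

lemma sum_logfact :
    Summable (fun y : ℕ => Real.log (Nat.factorial y : ℝ) * margGammaPoisson γ r y) := by
  refine Summable.of_nonneg_of_le (fun y => ?_) (fun y => ?_) (sum_sq hγ hr)
  · have h1 : (1:ℕ) ≤ Nat.factorial y := Nat.factorial_pos y
    exact mul_nonneg (Real.log_nonneg (by exact_mod_cast h1)) (marg_nonneg hγ hr y)
  · exact mul_le_mul_of_nonneg_right (logfact_le hγ hr y) (marg_nonneg hγ hr y)

/-! ### the esll formula -/

lemma esll_integrand_ae (y : ℕ) :
    (fun x : ℝ => Real.log (Real.exp (-x) * x ^ y / (Nat.factorial y : ℝ)))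
      =ᵐ[gammaMeasure γ r]
    (fun x : ℝ => -x + (y : ℝ) * Real.log x - Real.log (Nat.factorial y : ℝ)) := by
  filter_upwards [ae_pos γ r] with x hx
  have hx0 : (0:ℝ) < x := hx
  have hfac : ((Nat.factorial y : ℝ)) ≠ 0 := by exact_mod_cast Nat.factorial_ne_zero y
  have hnum : Real.exp (-x) * x ^ y ≠ 0 :=
    ne_of_gt (mul_pos (Real.exp_pos _) (pow_pos hx0 y))
  rw [Real.log_div hnum hfac, Real.log_mul (ne_of_gt (Real.exp_pos _))
    (ne_of_gt (pow_pos hx0 y)), Real.log_exp, Real.log_pow]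

lemma esll_nice_integrable (y' : ℕ) :
    Integrable (fun x : ℝ => -x + (y' : ℝ) * Real.log x
      - Real.log (Nat.factorial y' : ℝ)) (gammaMeasure γ r) := by
  haveI := isProbabilityMeasure_gammaMeasure hγ hr
  exact (((mean_integrable hγ hr).neg.add ((log_integrable hγ hr).const_mul _)).sub
    (integrable_const _))

lemma esll_integrable (y : ℕ) :
    Integrable (fun x : ℝ => Real.log (Real.exp (-x) * x ^ y / (Nat.factorial y : ℝ)))
      (gammaMeasure γ r) :=
  (esll_nice_integrable hγ hr y).congr (esll_integrand_ae hγ hr y).symm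

lemma esll_eq (y : ℕ) :
    esllGammaPoisson γ r y
      = -(γ / r) + (y : ℝ) * (A γ / Real.Gamma γ - Real.log r)
        - Real.log (Nat.factorial y : ℝ) := by
  haveI := isProbabilityMeasure_gammaMeasure hγ hr
  rw [esllGammaPoisson, integral_congr_ae (esll_integrand_ae hγ hr y)]
  have hI1 : Integrable (fun x : ℝ => -x + (y : ℝ) * Real.log x) (gammaMeasure γ r) :=
    (mean_integrable hγ hr).neg.add ((log_integrable hγ hr).const_mul _)
  have hI2 : Integrable (fun x : ℝ => -x) (gammaMeasure γ r) := (mean_integrable hγ hr).neg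
  have hI3 : Integrable (fun x : ℝ => (y : ℝ) * Real.log x) (gammaMeasure γ r) :=
    (log_integrable hγ hr).const_mul _
  rw [integral_sub hI1 (integrable_const _), integral_add hI2 hI3, integral_neg,
    integral_const_mul, mean_val hγ hr, log_val hγ hr, integral_const]
  simp

end weighted
end GP

theorem proxy_gamma_poisson (γ lam₀ : ℝ) (hγ : 0 < γ) (hlam₀ : 0 < lam₀) :
    (∀ lam : ℝ, 0 < lam →
      (∀ y : ℕ, Integrable
          (fun x : ℝ => Real.log (Real.exp (-x) * x ^ y / (Nat.factorial y : ℝ)))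
          (gammaMeasure γ lam)) ∧
        Summable (fun y : ℕ => margGammaPoisson γ lam₀ y * esllGammaPoisson γ lam y)) ∧
    (∀ lam : ℝ, 0 < lam → lam ≠ lam₀ →
      ∑' y : ℕ, margGammaPoisson γ lam₀ y * esllGammaPoisson γ lam y <
        ∑' y : ℕ, margGammaPoisson γ lam₀ y * esllGammaPoisson γ lam₀ y) := by
  -- abbreviations
  have s1 := GP.sum_marg hγ hlam₀
  have s2 := GP.sum_mean hγ hlam₀
  have s3 := GP.sum_logfact hγ hlam₀
  -- decomposition of the weighted series for any lam > 0
  have hdecomp : ∀ lam : ℝ, 0 < lam →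
      Summable (fun y : ℕ => margGammaPoisson γ lam₀ y * esllGammaPoisson γ lam y) ∧
      ∑' y : ℕ, margGammaPoisson γ lam₀ y * esllGammaPoisson γ lam y
        = -(γ / lam) + (GP.A γ / Real.Gamma γ - Real.log lam) * (γ / lam₀)
          - ∑' y : ℕ, Real.log (Nat.factorial y : ℝ) * margGammaPoisson γ lam₀ y := by
    intro lam hlam
    set L : ℝ := GP.A γ / Real.Gamma γ - Real.log lam with hL
    have hptw : ∀ y : ℕ, margGammaPoisson γ lam₀ y * esllGammaPoisson γ lam y
        = (-(γ / lam)) * margGammaPoisson γ lam₀ y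
          + L * ((y : ℝ) * margGammaPoisson γ lam₀ y)
          + (-1) * (Real.log (Nat.factorial y : ℝ) * margGammaPoisson γ lam₀ y) := by
      intro y
      rw [GP.esll_eq hγ hlam y]
      ring
    have sA := s1.1.mul_left (-(γ / lam))
    have sB := s2.1.mul_left L
    have sC := s3.mul_left (-1 : ℝ)
    constructor
    · exact ((sA.add sB).add sC).congr fun y => (hptw y).symm
    · calc ∑' y : ℕ, margGammaPoisson γ lam₀ y * esllGammaPoisson γ lam y
          = ∑' y : ℕ, ((-(γ / lam)) * margGammaPoisson γ lam₀ y
            + L * ((y : ℝ) * margGammaPoisson γ lam₀ y)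
            + (-1) * (Real.log (Nat.factorial y : ℝ) * margGammaPoisson γ lam₀ y)) :=
          tsum_congr hptw
        _ = (-(γ / lam)) * (∑' y : ℕ, margGammaPoisson γ lam₀ y)
            + L * (∑' y : ℕ, (y : ℝ) * margGammaPoisson γ lam₀ y)
            + (-1) * (∑' y : ℕ, Real.log (Nat.factorial y : ℝ) * margGammaPoisson γ lam₀ y) := by
          rw [Summable.tsum_add (sA.add sB) sC, Summable.tsum_add sA sB, tsum_mul_left, tsum_mul_left,
            tsum_mul_left]
        _ = _ := by
          rw [s1.2, s2.2]
          ring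
  constructor
  · intro lam hlam
    exact ⟨fun y => GP.esll_integrable hγ hlam y, (hdecomp lam hlam).1⟩
  · intro lam hlam hne
    rw [(hdecomp lam hlam).2, (hdecomp lam₀ hlam₀).2]
    have hdiv : (0:ℝ) < lam₀ / lam := div_pos hlam₀ hlam
    have hne1 : lam₀ / lam ≠ 1 := by
      intro h
      exact hne (by field_simp at h; linarith)
    have hlog : Real.log (lam₀ / lam) < lam₀ / lam - 1 :=
      Real.log_lt_sub_one_of_pos hdiv hne1
    rw [Real.log_div (ne_of_gt hlam₀) (ne_of_gt hlam)] at hlog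
    have hK : (0:ℝ) < γ / lam₀ := div_pos hγ hlam₀
    have h := mul_lt_mul_of_pos_left hlog hK
    have hid : γ / lam₀ * (lam₀ / lam - 1) = γ / lam - γ / lam₀ := by
      field_simp
    rw [hid] at h
    nlinarith [h]
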